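/- Let n ≥ 1 and let π be a 321-avoiding permutation of {1,…,n}. Let i < i' be two excedance locations of π such that no index strictly between i and i' is an excedance location. Then the number of elements x of the connectivity set of π with i < x ≤ i' equals max{i' − π(i), 0}. -/

import Mathlib

/-- A permutation `π` of `{1,…,n}` (modeled as `Fin n`) is 321-avoiding if there are no
indices `i < j < k` with `π k < π j < π i`. -/
def Avoids321 {n : ℕ} (π : Equiv.Perm (Fin n)) : Prop :=
  ∀ i j k : Fin n, i < j → j < k → ¬(π k < π j ∧ π j < π i)

/-- The connectivity set of a permutation of `{1,…,n}` is the set of indices `i` such that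
`π k < i` for every `k < i`.  In the 0-based model `Fin n` (the 1-based index `i` corresponds
to the element `x` of value `i - 1`), the condition becomes `π k < x` for every `k < x`. -/
def ConnectivitySet {n : ℕ} (π : Equiv.Perm (Fin n)) : Set (Fin n) :=
  {x : Fin n | ∀ k : Fin n, k < x → π k < x}

/-- Let `π` be a 321-avoiding permutation of `{1,…,n}` and let `i < i'` be two excedance
locations of `π` with no excedance location strictly between them.  Then the number of
elements `x` of the connectivity set of `π` with `i < x ≤ i'` equals `max{i' − π(i), 0}`.
In the 0-based model `Fin n` the 1-based quantity `i' − π(i)` is `(i' : ℕ) - (π i : ℕ)`,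
and truncated subtraction on `ℕ` realizes the `max{·, 0}`. -/
theorem stmt5 (n : ℕ) (hn : 1 ≤ n) (π : Equiv.Perm (Fin n)) (h321 : Avoids321 π)
    (i i' : Fin n) (hlt : i < i') (hi : i < π i) (hi' : i' < π i')
    (hbetween : ∀ x : Fin n, i < x → x < i' → ¬ x < π x) :
    Nat.card {x : Fin n // x ∈ ConnectivitySet π ∧ i < x ∧ x ≤ i'} =
      (i' : ℕ) - (π i : ℕ) := by
  have key : ∀ x : Fin n, (x ∈ ConnectivitySet π ∧ i < x ∧ x ≤ i') ↔ (π i < x ∧ x ≤ i') := by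
    intro x
    constructor
    · rintro ⟨hc, hix, hxi'⟩
      exact ⟨hc i hix, hxi'⟩
    · rintro ⟨hpx, hxi'⟩
      have hix : i < x := lt_trans hi hpx
      refine ⟨?_, hix, hxi'⟩
      intro k hk
      rcases lt_trichotomy k i with hki | rfl | hik
      · -- k < i : use 321-avoidance
        by_contra hge
        push_neg at hge
        -- hge : x ≤ π k
        have hex : ∃ m : Fin n, i < m ∧ π m ≤ i := by
          by_contra hno
          push_neg at hno
          have hmaps : ∀ v ∈ Finset.Iic i, π⁻¹ v ∈ Finset.Iic i := by
            intro v hv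
            simp only [Finset.mem_Iic] at hv ⊢
            by_contra hgt
            push_neg at hgt
            have := hno (π⁻¹ v) hgt
            rw [Equiv.Perm.coe_inv, Equiv.apply_symm_apply] at this
            exact absurd hv (not_le.mpr this)
          have hinj : ∀ (a b : Fin n), a ∈ Finset.Iic i → b ∈ Finset.Iic i →
              π⁻¹ a = π⁻¹ b → a = b := fun a b _ _ h => π⁻¹.injective h
          obtain ⟨v, hv, hveq⟩ := Finset.surj_on_of_inj_on_of_card_le
            (fun v _ => π⁻¹ v) hmaps hinj le_rfl i (Finset.mem_Iic.mpr le_rfl)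
          have : π i = v := by
            rw [hveq, Equiv.Perm.coe_inv, Equiv.apply_symm_apply]
          rw [this] at hi
          exact absurd (Finset.mem_Iic.mp hv) (not_le.mpr hi)
        obtain ⟨m, him, hpm⟩ := hex
        exact h321 k i m hki him ⟨lt_of_le_of_lt hpm hi, lt_of_lt_of_le hpx hge⟩
      · exact hpx
      · -- i < k < i' : no excedance
        have hki' : k < i' := lt_of_lt_of_le hk hxi'
        have hne := hbetween k hik hki'
        push_neg at hne
        exact lt_of_le_of_lt hne hk
  have e : {x : Fin n // x ∈ ConnectivitySet π ∧ i < x ∧ x ≤ i'} ≃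
      {x : Fin n // x ∈ Finset.Ioc (π i) i'} :=
    Equiv.subtypeEquivRight (fun x => by rw [key x, Finset.mem_Ioc])
  rw [Nat.card_congr e, Nat.card_eq_fintype_card, Fintype.card_coe, Fin.card_Ioc]
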